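/- Unnesting of nested loops: for all lists A, B, C over L and all loop labels s, t : β, the cyclic words [s⁺] ++ A ++ [t⁺] ++ B ++ [t⁻] ++ C ++ [s⁻] and [s⁺] ++ A ++ C ++ [s⁻] ++ [t⁺] ++ B ++ [t⁻] are mutation-equivalent, i.e. R ([s⁺] ++ A ++ [t⁺] ++ B ++ [t⁻] ++ C ++ [s⁻]) ([s⁺] ++ A ++ C ++ [s⁻] ++ [t⁺] ++ B ++ [t⁻]). -/

import Mathlib

/-- One-step moves on cyclic words over the letter type `α ⊕ β × Bool`
(`α` = outer letters, `β` = loop labels, `Sum.inr (t, true)` = `t⁺`,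
`Sum.inr (t, false)` = `t⁻`): rotation and the basic mutation. -/
def MutStep (α β : Type*) : List (α ⊕ β × Bool) → List (α ⊕ β × Bool) → Prop :=
  fun w₁ w₂ =>
    (∃ (x : α ⊕ β × Bool) (w : List (α ⊕ β × Bool)), w₁ = x :: w ∧ w₂ = w ++ [x]) ∨
    (∃ (t : β) (A B C D : List (α ⊕ β × Bool)),
      w₁ = A ++ [Sum.inr (t, true)] ++ B ++ C ++ [Sum.inr (t, false)] ++ D ∧
      w₂ = D ++ [Sum.inr (t, true)] ++ C ++ B ++ [Sum.inr (t, false)] ++ A)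

/-- Mutation equivalence of cyclic words: the smallest equivalence relation
(reflexive–symmetric–transitive closure) containing the one-step moves. -/
def MutEquiv (α β : Type*) : List (α ⊕ β × Bool) → List (α ⊕ β × Bool) → Prop :=
  Relation.EqvGen (MutStep α β)

/-- Rotation: `u ++ v` is mutation-equivalent to `v ++ u`. -/
theorem mut_rotate {α β : Type*} (u v : List (α ⊕ β × Bool)) :
    MutEquiv α β (u ++ v) (v ++ u) := by
  induction u generalizing v with
  | nil => simpa [MutEquiv] using Relation.EqvGen.refl v
  | cons x u ih =>
    apply Relation.EqvGen.trans _ (u ++ (v ++ [x])) _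
    · apply Relation.EqvGen.rel
      exact Or.inl ⟨x, u ++ v, by simp, by simp⟩
    · have := ih (v ++ [x])
      simpa [MutEquiv] using this

/-- Unnesting of nested loops:
`(s⁺ A t⁺ B t⁻ C s⁻)` is mutation-equivalent to `(s⁺ A C s⁻ t⁺ B t⁻)`. -/
theorem mut_unnest {α β : Type*} (A B C : List (α ⊕ β × Bool)) (s t : β) :
    MutEquiv α β
      ([Sum.inr (s, true)] ++ A ++ [Sum.inr (t, true)] ++ B ++ [Sum.inr (t, false)] ++ C
        ++ [Sum.inr (s, false)])
      ([Sum.inr (s, true)] ++ A ++ C ++ [Sum.inr (s, false)] ++ [Sum.inr (t, true)] ++ B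
        ++ [Sum.inr (t, false)]) := by
  apply Relation.EqvGen.trans _
    ((C ++ [Sum.inr (s, false)] ++ [Sum.inr (t, true)] ++ B ++ [Sum.inr (t, false)]) ++
      ([Sum.inr (s, true)] ++ A)) _
  · apply Relation.EqvGen.rel
    refine Or.inr ⟨t, [Sum.inr (s, true)] ++ A, B, [],
      C ++ [Sum.inr (s, false)], by simp, by simp⟩
  · have := mut_rotate (α := α) (β := β)
      (C ++ [Sum.inr (s, false)] ++ [Sum.inr (t, true)] ++ B ++ [Sum.inr (t, false)])
      ([Sum.inr (s, true)] ++ A)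
    simpa [MutEquiv] using this
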